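/- For any graph H and any edge e of H, wr(H)/wr(H-e) ≥ 7/9, where wr(G) counts Widom-Rowlinson configurations of G. -/

import Mathlib

open SimpleGraph

/-- Number of Widom-Rowlinson configurations of a graph: colorings of the vertices with
red (0), white (1) and blue (2) such that no red vertex is adjacent to a blue vertex. -/
noncomputable def wrCount {V : Type*} (H : SimpleGraph V) : ℕ :=
  Nat.card {c : V → Fin 3 // ∀ a b, H.Adj a b → ¬(c a = 0 ∧ c b = 2)}

open Finset

open scoped Classical

namespace WRproof

variable {V : Type*} [Fintype V]

def WRvalid (G : SimpleGraph V) (c : V → Fin 3) : Prop :=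
  ∀ a b, G.Adj a b → ¬(c a = 0 ∧ c b = 2)

noncomputable def mcard (G : SimpleGraph V) (u v : V) (i j : Fin 3) : ℕ :=
  (univ.filter fun c : V → Fin 3 => WRvalid G c ∧ (c u, c v) = (i, j)).card

lemma wrCount_eq (G : SimpleGraph V) :
    wrCount G = (univ.filter fun c : V → Fin 3 => WRvalid G c).card := by
  rw [wrCount, Nat.card_eq_fintype_card, Fintype.card_subtype]
  exact congrArg Finset.card (Finset.filter_congr (fun x _ => Iff.rfl))

lemma validH_iff {H : SimpleGraph V} {u v : V} (he : H.Adj u v) (c : V → Fin 3) :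
    WRvalid H c ↔ WRvalid (H.deleteEdges {s(u, v)}) c ∧
      ¬(c u = 0 ∧ c v = 2) ∧ ¬(c v = 0 ∧ c u = 2) := by
  constructor
  · intro h
    refine ⟨fun a b hab hc => h a b ?_ hc, h u v he, h v u he.symm⟩
    rw [deleteEdges_adj] at hab
    exact hab.1
  · rintro ⟨hG, h1, h2⟩ a b hab ⟨ha, hb⟩
    by_cases hs : s(a, b) = s(u, v)
    · rw [Sym2.eq_iff] at hs
      rcases hs with ⟨rfl, rfl⟩ | ⟨rfl, rfl⟩
      · exact h1 ⟨ha, hb⟩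
      · exact h2 ⟨ha, hb⟩
    · exact hG a b (by rw [deleteEdges_adj]; exact ⟨hab, by simpa using hs⟩) ⟨ha, hb⟩

lemma valid_update_one (G : SimpleGraph V) {c : V → Fin 3} (hc : WRvalid G c) (x : V) :
    WRvalid G (Function.update c x 1) := by
  rintro a b hab ⟨ha, hb⟩
  by_cases hax : a = x
  · subst hax; rw [Function.update_self] at ha; exact absurd ha (by decide)
  · rw [Function.update_of_ne hax] at ha
    by_cases hbx : b = x
    · subst hbx; rw [Function.update_self] at hb; exact absurd hb (by decide)
    · rw [Function.update_of_ne hbx] at hb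
      exact hc a b hab ⟨ha, hb⟩

/-- recolor v : 2 → 1 -/
lemma m02_le_m01 (G : SimpleGraph V) {u v : V} (huv : u ≠ v) :
    mcard G u v 0 2 ≤ mcard G u v 0 1 := by
  unfold mcard
  apply card_le_card_of_injOn (fun c => Function.update c v 1)
  · intro c hc
    simp only [Finset.mem_coe, mem_filter, mem_univ, true_and, Prod.mk.injEq] at hc ⊢
    obtain ⟨hval, hu, hv⟩ := hc
    exact ⟨valid_update_one G hval v, by rw [Function.update_of_ne huv]; exact hu,
      Function.update_self v 1 c⟩
  · intro c1 h1 c2 h2 heq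
    simp only [Finset.coe_filter, Set.mem_setOf_eq, mem_univ, true_and, Prod.mk.injEq] at h1 h2
    have e1 : Function.update (Function.update c1 v 1) v 2 = c1 := by
      rw [Function.update_idem, ← h1.2.2, Function.update_eq_self]
    have e2 : Function.update (Function.update c2 v 1) v 2 = c2 := by
      rw [Function.update_idem, ← h2.2.2, Function.update_eq_self]
    rw [← e1, ← e2]
    exact congrArg (fun f => Function.update f v 2) heq

/-- recolor u : 0 → 1 -/
lemma m02_le_m12 (G : SimpleGraph V) {u v : V} (huv : u ≠ v) :
    mcard G u v 0 2 ≤ mcard G u v 1 2 := by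
  unfold mcard
  apply card_le_card_of_injOn (fun c => Function.update c u 1)
  · intro c hc
    simp only [Finset.mem_coe, mem_filter, mem_univ, true_and, Prod.mk.injEq] at hc ⊢
    obtain ⟨hval, hu, hv⟩ := hc
    exact ⟨valid_update_one G hval u, Function.update_self u 1 c,
      by rw [Function.update_of_ne (Ne.symm huv)]; exact hv⟩
  · intro c1 h1 c2 h2 heq
    simp only [Finset.coe_filter, Set.mem_setOf_eq, mem_univ, true_and, Prod.mk.injEq] at h1 h2
    have e1 : Function.update (Function.update c1 u 1) u 0 = c1 := by
      rw [Function.update_idem, ← h1.2.1, Function.update_eq_self]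
    have e2 : Function.update (Function.update c2 u 1) u 0 = c2 := by
      rw [Function.update_idem, ← h2.2.1, Function.update_eq_self]
    rw [← e1, ← e2]
    exact congrArg (fun f => Function.update f u 0) heq

/-- recolor both u and v to 1 -/
lemma m02_le_m11 (G : SimpleGraph V) {u v : V} (huv : u ≠ v) :
    mcard G u v 0 2 ≤ mcard G u v 1 1 := by
  unfold mcard
  apply card_le_card_of_injOn (fun c => Function.update (Function.update c u 1) v 1)
  · intro c hc
    simp only [Finset.mem_coe, mem_filter, mem_univ, true_and, Prod.mk.injEq] at hc ⊢
    obtain ⟨hval, hu, hv⟩ := hc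
    refine ⟨valid_update_one G (valid_update_one G hval u) v, ?_, Function.update_self v 1 _⟩
    rw [Function.update_of_ne huv, Function.update_self]
  · intro c1 h1 c2 h2 heq
    simp only [Finset.coe_filter, Set.mem_setOf_eq, mem_univ, true_and, Prod.mk.injEq] at h1 h2
    have key : ∀ c : V → Fin 3, c u = 0 → c v = 2 →
        Function.update (Function.update (Function.update (Function.update c u 1) v 1) v 2) u 0
          = c := by
      intro c hu hv
      funext w
      by_cases hwu : w = u
      · subst hwu; rw [Function.update_self, hu]
      · rw [Function.update_of_ne hwu]
        by_cases hwv : w = v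
        · subst hwv; rw [Function.update_self, hv]
        · rw [Function.update_of_ne hwv, Function.update_of_ne hwv,
            Function.update_of_ne hwu]
    rw [← key c1 h1.2.1 h1.2.2, ← key c2 h2.2.1 h2.2.2]
    exact congrArg (fun f => Function.update (Function.update f v 2) u 0) heq

/-- color-swap symmetry -/
lemma mcard_swap (G : SimpleGraph V) (u v : V) (i j : Fin 3) :
    mcard G u v i j = mcard G u v (2 - i) (2 - j) := by
  have d1 : ∀ x : Fin 3, 2 - (2 - x) = x := by decide
  have d2 : ∀ x : Fin 3, 2 - x = 0 → x = 2 := by decide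
  have d3 : ∀ x : Fin 3, 2 - x = 2 → x = 0 := by decide
  have hval : ∀ c : V → Fin 3, WRvalid G c → WRvalid G (fun w => 2 - c w) := by
    rintro c hc a b hab ⟨ha, hb⟩
    exact hc b a hab.symm ⟨d3 _ hb, d2 _ ha⟩
  unfold mcard
  refine Finset.card_bij' (fun c _ => (fun w => 2 - c w)) (fun c _ => (fun w => 2 - c w))
    ?_ ?_ ?_ ?_
  · intro c hc
    simp only [Finset.mem_coe, mem_filter, mem_univ, true_and, Prod.mk.injEq] at hc ⊢
    exact ⟨hval c hc.1, by rw [hc.2.1], by rw [hc.2.2]⟩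
  · intro c hc
    simp only [Finset.mem_coe, mem_filter, mem_univ, true_and, Prod.mk.injEq] at hc ⊢
    exact ⟨hval c hc.1, by rw [hc.2.1, d1], by rw [hc.2.2, d1]⟩
  · intro c _; funext w; exact d1 _
  · intro c _; funext w; exact d1 _

/-! ### The cluster-swap injection -/

def clG (G : SimpleGraph V) (c : V → Fin 3) (k : Fin 3) : SimpleGraph V where
  Adj a b := G.Adj a b ∧ c a = k ∧ c b = k
  symm := ⟨fun a b h => ⟨h.1.symm, h.2.2, h.2.1⟩⟩
  loopless := ⟨fun a h => G.loopless.irrefl a h.1⟩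

lemma walk_closed {G : SimpleGraph V} {s : Set V}
    (h : ∀ a b, G.Adj a b → a ∈ s → b ∈ s) :
    ∀ {a b : V}, G.Walk a b → a ∈ s → b ∈ s := by
  intro a b p
  induction p with
  | nil => exact id
  | cons hadj _ ih => exact fun ha => ih (h _ _ hadj ha)

lemma reach_closed {G : SimpleGraph V} {s : Set V}
    (h : ∀ a b, G.Adj a b → a ∈ s → b ∈ s) {a b : V}
    (hr : G.Reachable a b) (ha : a ∈ s) : b ∈ s := by
  obtain ⟨p⟩ := hr; exact walk_closed h p ha

noncomputable def fcl (G : SimpleGraph V) (v : V) (c : V → Fin 3) : V → Fin 3 :=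
  fun w => if (clG G c 2).Reachable v w then 0 else c w

noncomputable def gcl (G : SimpleGraph V) (v : V) (c : V → Fin 3) : V → Fin 3 :=
  fun w => if (clG G c 0).Reachable v w then 2 else c w

section clusterfacts

variable {G : SimpleGraph V} {v : V} {c : V → Fin 3}

lemma fcl_pos {w : V} (h : (clG G c 2).Reachable v w) : fcl G v c w = 0 := if_pos h

lemma fcl_neg {w : V} (h : ¬ (clG G c 2).Reachable v w) : fcl G v c w = c w := if_neg h

lemma gcl_pos {w : V} (h : (clG G c 0).Reachable v w) : gcl G v c w = 2 := if_pos h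

lemma gcl_neg {w : V} (h : ¬ (clG G c 0).Reachable v w) : gcl G v c w = c w := if_neg h

lemma reach_col (hv : c v = 2) {w : V} (hw : (clG G c 2).Reachable v w) : c w = 2 :=
  reach_closed (s := {x | c x = 2})
    (fun a b (hab : (clG G c 2).Adj a b) _ => hab.2.2) hw hv

lemma reach_fwd {w : V} (hw : (clG G c 2).Reachable v w) :
    (clG G (fcl G v c) 0).Reachable v w := by
  have : w ∈ {x | (clG G c 2).Reachable v x ∧ (clG G (fcl G v c) 0).Reachable v x} := by
    refine reach_closed ?_ hw ⟨Reachable.refl v, Reachable.refl v⟩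
    rintro a b hab ⟨ha1, ha2⟩
    have hb1 : (clG G c 2).Reachable v b := ha1.trans (SimpleGraph.Adj.reachable hab)
    have hadj : (clG G (fcl G v c) 0).Adj a b := ⟨hab.1, fcl_pos ha1, fcl_pos hb1⟩
    exact ⟨hb1, ha2.trans (SimpleGraph.Adj.reachable hadj)⟩
  exact this.2

lemma reach_bwd (hc : WRvalid G c) (hv : c v = 2) {w : V}
    (hw : (clG G (fcl G v c) 0).Reachable v w) : (clG G c 2).Reachable v w := by
  refine reach_closed (s := {x | (clG G c 2).Reachable v x}) ?_ hw (Reachable.refl v)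
  rintro a b hab ha
  by_contra hb
  have hcb : c b = 0 := by
    have h2 := hab.2.2
    rwa [fcl_neg hb] at h2
  have hca : c a = 2 := reach_col hv ha
  exact hc b a hab.1.symm ⟨hcb, hca⟩

lemma valid_fcl (hc : WRvalid G c) (hv : c v = 2) : WRvalid G (fcl G v c) := by
  rintro a b hab ⟨ha, hb⟩
  have hb' : ¬ (clG G c 2).Reachable v b := by
    intro h
    rw [fcl_pos h] at hb
    exact absurd hb (by decide)
  have hbc : c b = 2 := by rwa [fcl_neg hb'] at hb
  by_cases hra : (clG G c 2).Reachable v a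
  · exact hb' (hra.trans (SimpleGraph.Adj.reachable ⟨hab, reach_col hv hra, hbc⟩))
  · have hac : c a = 0 := by rwa [fcl_neg hra] at ha
    exact hc a b hab ⟨hac, hbc⟩

lemma fcl_at (hv : c v = 2) {w : V} (hw : c w ≠ 2) : fcl G v c w = c w :=
  fcl_neg (fun h => hw (reach_col hv h))

lemma fcl_v : fcl G v c v = 0 := fcl_pos (Reachable.refl v)

lemma gcl_fcl (hc : WRvalid G c) (hv : c v = 2) : gcl G v (fcl G v c) = c := by
  funext w
  by_cases hw : (clG G (fcl G v c) 0).Reachable v w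
  · rw [gcl_pos hw]
    exact (reach_col hv (reach_bwd hc hv hw)).symm
  · have hw2 : ¬ (clG G c 2).Reachable v w := fun h => hw (reach_fwd h)
    rw [gcl_neg hw, fcl_neg hw2]

end clusterfacts

/-- the cluster-swap inequality -/
lemma m02_le_m00 (G : SimpleGraph V) (u v : V) :
    mcard G u v 0 2 ≤ mcard G u v 0 0 := by
  unfold mcard
  apply card_le_card_of_injOn (fun c => fcl G v c)
  · intro c hc
    simp only [Finset.mem_coe, mem_filter, mem_univ, true_and, Prod.mk.injEq] at hc ⊢
    obtain ⟨hval, hu, hv⟩ := hc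
    refine ⟨valid_fcl hval hv, ?_, fcl_v⟩
    rw [fcl_at hv (by rw [hu]; decide)]
    exact hu
  · intro c1 h1 c2 h2 heq
    simp only [Finset.coe_filter, Set.mem_setOf_eq, mem_univ, true_and, Prod.mk.injEq] at h1 h2
    rw [← gcl_fcl h1.1 h1.2.2, ← gcl_fcl h2.1 h2.2.2]
    exact congrArg (gcl G v) heq

/-! ### Counting -/

lemma good_filter {H : SimpleGraph V} {u v : V} (he : H.Adj u v) (i j : Fin 3)
    (hij : ¬(i = 0 ∧ j = 2)) (hji : ¬(j = 0 ∧ i = 2)) :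
    (univ.filter fun c : V → Fin 3 => WRvalid H c ∧ (c u, c v) = (i, j)).card
      = mcard (H.deleteEdges {s(u, v)}) u v i j := by
  unfold mcard
  congr 1
  apply Finset.filter_congr
  intro c _
  simp only [Prod.mk.injEq]
  constructor
  · rintro ⟨hH, hu, hv⟩
    exact ⟨((validH_iff he c).mp hH).1, hu, hv⟩
  · rintro ⟨hG, hu, hv⟩
    refine ⟨(validH_iff he c).mpr ⟨hG, ?_, ?_⟩, hu, hv⟩
    · rw [hu, hv]; exact hij
    · rw [hu, hv]; exact hji

lemma bad_filter02 {H : SimpleGraph V} {u v : V} (he : H.Adj u v) :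
    (univ.filter fun c : V → Fin 3 =>
      WRvalid H c ∧ (c u, c v) = ((0 : Fin 3), (2 : Fin 3))) = ∅ := by
  rw [Finset.filter_eq_empty_iff]
  rintro c _ ⟨hval, hp⟩
  rw [Prod.mk.injEq] at hp
  exact hval u v he ⟨hp.1, hp.2⟩

lemma bad_filter20 {H : SimpleGraph V} {u v : V} (he : H.Adj u v) :
    (univ.filter fun c : V → Fin 3 =>
      WRvalid H c ∧ (c u, c v) = ((2 : Fin 3), (0 : Fin 3))) = ∅ := by
  rw [Finset.filter_eq_empty_iff]
  rintro c _ ⟨hval, hp⟩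
  rw [Prod.mk.injEq] at hp
  exact hval v u he.symm ⟨hp.2, hp.1⟩

lemma wr_fiber_sum (G : SimpleGraph V) (u v : V) :
    wrCount G = ((univ.filter fun c : V → Fin 3 => WRvalid G c ∧ (c u, c v) = (0, 0)).card
      + (univ.filter fun c : V → Fin 3 => WRvalid G c ∧ (c u, c v) = (0, 1)).card
      + (univ.filter fun c : V → Fin 3 => WRvalid G c ∧ (c u, c v) = (0, 2)).card)
      + ((univ.filter fun c : V → Fin 3 => WRvalid G c ∧ (c u, c v) = (1, 0)).card
      + (univ.filter fun c : V → Fin 3 => WRvalid G c ∧ (c u, c v) = (1, 1)).card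
      + (univ.filter fun c : V → Fin 3 => WRvalid G c ∧ (c u, c v) = (1, 2)).card)
      + ((univ.filter fun c : V → Fin 3 => WRvalid G c ∧ (c u, c v) = (2, 0)).card
      + (univ.filter fun c : V → Fin 3 => WRvalid G c ∧ (c u, c v) = (2, 1)).card
      + (univ.filter fun c : V → Fin 3 => WRvalid G c ∧ (c u, c v) = (2, 2)).card) := by
  rw [wrCount_eq]
  rw [Finset.card_eq_sum_card_fiberwise
    (f := fun c : V → Fin 3 => (c u, c v)) (t := (univ : Finset (Fin 3 × Fin 3)))
    (fun x _ => mem_univ _)]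
  rw [Fintype.sum_prod_type]
  simp only [Fin.sum_univ_three, Finset.filter_filter]

end WRproof

open WRproof in
theorem stmt_15 {V : Type*} [Fintype V] (H : SimpleGraph V) (u v : V) (he : H.Adj u v) :
    (wrCount H : ℝ) / (wrCount (H.deleteEdges {s(u, v)}) : ℝ) ≥ 7 / 9 := by
  have huv : u ≠ v := he.ne
  set G := H.deleteEdges {s(u, v)} with hGdef
  clear_value G
  -- the nine fiber counts of G
  have hGsum := wr_fiber_sum G u v
  -- fiber sum for H, converting each fiber
  have hHsum := wr_fiber_sum H u v
  rw [good_filter he 0 0 (by decide) (by decide), good_filter he 0 1 (by decide) (by decide),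
    bad_filter02 he, good_filter he 1 0 (by decide) (by decide),
    good_filter he 1 1 (by decide) (by decide), good_filter he 1 2 (by decide) (by decide),
    bad_filter20 he, good_filter he 2 1 (by decide) (by decide),
    good_filter he 2 2 (by decide) (by decide), Finset.card_empty] at hHsum
  rw [← hGdef] at hHsum
  -- identify the G-fiber counts with mcard
  have hGsum' : wrCount G = (mcard G u v 0 0 + mcard G u v 0 1 + mcard G u v 0 2)
      + (mcard G u v 1 0 + mcard G u v 1 1 + mcard G u v 1 2)
      + (mcard G u v 2 0 + mcard G u v 2 1 + mcard G u v 2 2) := hGsum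
  -- symmetry
  have e20 : (2 - 0 : Fin 3) = 2 := by decide
  have e22 : (2 - 2 : Fin 3) = 0 := by decide
  have e21 : (2 - 1 : Fin 3) = 1 := by decide
  have s1 : mcard G u v 0 2 = mcard G u v 2 0 := by
    rw [mcard_swap G u v 0 2, e20, e22]
  have s2 : mcard G u v 2 2 = mcard G u v 0 0 := by
    rw [mcard_swap G u v 2 2, e22]
  have s3 : mcard G u v 2 1 = mcard G u v 0 1 := by
    rw [mcard_swap G u v 2 1, e22, e21]
  have s4 : mcard G u v 1 0 = mcard G u v 1 2 := by
    rw [mcard_swap G u v 1 0, e21, e20]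
  have i1 := m02_le_m01 G huv
  have i2 := m02_le_m12 G huv
  have i3 := m02_le_m11 G huv
  have i4 := m02_le_m00 G u v
  -- positivity
  have hpos : 0 < wrCount G := by
    have : Nonempty {c : V → Fin 3 // ∀ a b, G.Adj a b → ¬(c a = 0 ∧ c b = 2)} := by
      refine ⟨⟨fun _ => 1, fun a b _ h => ?_⟩⟩
      have h1 : (1 : Fin 3) = 0 := h.1
      exact absurd h1 (by decide)
    exact Nat.card_pos
  have key : 7 * wrCount G ≤ 9 * wrCount H := by
    have hH' : wrCount H = (mcard G u v 0 0 + mcard G u v 0 1 + 0)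
        + (mcard G u v 1 0 + mcard G u v 1 1 + mcard G u v 1 2)
        + (0 + mcard G u v 2 1 + mcard G u v 2 2) := hHsum
    clear hHsum hGsum hGdef
    omega
  have hpos' : (0 : ℝ) < (wrCount G : ℝ) := by exact_mod_cast hpos
  rw [ge_iff_le, div_le_div_iff₀ (by norm_num) hpos']
  have h79 : (7 * wrCount G : ℕ) ≤ wrCount H * 9 := by clear hHsum hGsum hGdef hpos' hGsum'; omega
  exact_mod_cast h79
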